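/- Let H₀ be a Hilbert space, T a bounded positive self-adjoint operator on H₀ with 0 < c ≤ T ≤ C, realized as multiplication by e^{-λ(x)} on L²(X, μ) via the spectral theorem. For ε > 0, s > 1/ε and h ∈ L²(μ), let h_s = h·1_{λ > 1+ε}. Then ‖h - h_s‖₀² ≤ 2ε ∫₀^s e^t ∫_X |h|² e^{-tλ} dμ dt and ∫_X |h_s|² e^{-sλ} dμ ≤ e^{-(1+ε)s} ‖h‖₀². -/

import Mathlib

open MeasureTheory Real

theorem stmt15 {X : Type*} [MeasurableSpace X] (μ : Measure X)
    (lam : X → ℝ) (hlam_meas : Measurable lam)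
    (c C : ℝ) (hc : 0 < c)
    (hT_bdd : ∀ x, c ≤ Real.exp (-lam x) ∧ Real.exp (-lam x) ≤ C)
    (h : X → ℂ) (hh : MemLp h 2 μ)
    (ε s : ℝ) (hε : 0 < ε) (hs : 1 / ε < s) :
    (∫ x, ‖h x - Set.indicator {x | 1 + ε < lam x} h x‖ ^ 2 ∂μ
        ≤ 2 * ε * ∫ t in (0:ℝ)..s, Real.exp t *
            ∫ x, ‖h x‖ ^ 2 * Real.exp (-(t * lam x)) ∂μ) ∧
      (∫ x, ‖Set.indicator {x | 1 + ε < lam x} h x‖ ^ 2 * Real.exp (-(s * lam x)) ∂μ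
        ≤ Real.exp (-((1 + ε) * s)) * ∫ x, ‖h x‖ ^ 2 ∂μ) := by
  have hs0 : 0 < s := lt_trans (by positivity) hs
  set S : Set X := {x | 1 + ε < lam x} with hSdef
  have hS : MeasurableSet S := measurableSet_lt measurable_const hlam_meas
  -- bound on lam
  set M : ℝ := max |Real.log c| |Real.log C| with hMdef
  have hM0 : 0 ≤ M := le_trans (abs_nonneg _) (le_max_left _ _)
  have hM : ∀ x, |lam x| ≤ M := by
    intro x
    obtain ⟨h1, h2⟩ := hT_bdd x
    have hl1 : -lam x ≤ Real.log C := by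
      have := Real.log_le_log (Real.exp_pos _) h2
      simpa using this
    have hl2 : Real.log c ≤ -lam x := by
      have := Real.log_le_log hc h1
      simpa using this
    rw [abs_le]
    have hCM : Real.log C ≤ M := le_trans (le_abs_self _) (le_max_right _ _)
    have hcM : -Real.log c ≤ M := le_trans (neg_le_abs _) (le_max_left _ _)
    constructor
    · linarith
    · linarith
  have hInt : Integrable (fun x => ‖h x‖ ^ 2) μ := hh.norm.integrable_sq
  have hexp_meas : ∀ t : ℝ, AEStronglyMeasurable (fun x => Real.exp (-(t * lam x))) μ :=
    fun t => ((hlam_meas.const_mul t).neg.exp).aestronglyMeasurable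
  have hexp_bdd : ∀ t : ℝ, ∀ x, ‖Real.exp (-(t * lam x))‖ ≤ Real.exp (|t| * M) := by
    intro t x
    rw [Real.norm_eq_abs, abs_of_pos (Real.exp_pos _)]
    apply Real.exp_le_exp.2
    calc -(t * lam x) ≤ |t * lam x| := neg_le_abs _
      _ = |t| * |lam x| := abs_mul _ _
      _ ≤ |t| * M := mul_le_mul_of_nonneg_left (hM x) (abs_nonneg t)
  have hIntt : ∀ t : ℝ, Integrable (fun x => ‖h x‖ ^ 2 * Real.exp (-(t * lam x))) μ := by
    intro t
    have := hInt.bdd_mul (hexp_meas t) (Filter.Eventually.of_forall (hexp_bdd t))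
    exact this.congr (Filter.Eventually.of_forall fun x => mul_comm _ _)
  -- W : mass on {lam ≤ 1 + ε}
  set W : ℝ := ∫ x, Set.indicator Sᶜ (fun x => ‖h x‖ ^ 2) x ∂μ with hWdef
  have hIntW : Integrable (Set.indicator Sᶜ fun x => ‖h x‖ ^ 2) μ := hInt.indicator hS.compl
  have hW0 : 0 ≤ W := by
    apply integral_nonneg
    intro x
    exact Set.indicator_nonneg (fun y _ => by positivity) x
  -- continuity of the inner integral in t on [0, s]
  have hcont : ContinuousOn (fun t => ∫ x, ‖h x‖ ^ 2 * Real.exp (-(t * lam x)) ∂μ)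
      (Set.Icc 0 s) := by
    apply continuousOn_of_dominated (bound := fun x => ‖h x‖ ^ 2 * Real.exp (s * M))
    · intro t _
      exact hInt.aestronglyMeasurable.mul (hexp_meas t)
    · intro t ht
      filter_upwards with x
      rw [Real.norm_eq_abs, abs_mul, abs_of_nonneg (by positivity : (0:ℝ) ≤ ‖h x‖ ^ 2)]
      apply mul_le_mul_of_nonneg_left _ (by positivity)
      calc |Real.exp (-(t * lam x))| = ‖Real.exp (-(t * lam x))‖ := rfl
        _ ≤ Real.exp (|t| * M) := hexp_bdd t x
        _ ≤ Real.exp (s * M) := by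
            apply Real.exp_le_exp.2
            apply mul_le_mul_of_nonneg_right _ hM0
            rw [abs_of_nonneg ht.1]; exact ht.2
    · exact hInt.mul_const _
    · filter_upwards with x
      exact (Continuous.continuousOn (by fun_prop))
  have hg_int : IntervalIntegrable
      (fun t => Real.exp t * ∫ x, ‖h x‖ ^ 2 * Real.exp (-(t * lam x)) ∂μ) volume 0 s := by
    apply ContinuousOn.intervalIntegrable
    rw [Set.uIcc_of_le hs0.le]
    exact Real.continuous_exp.continuousOn.mul hcont
  -- pointwise lower bound on [0, s]
  have key : ∀ t ∈ Set.Icc (0:ℝ) s, Real.exp (-(ε * t)) * W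
      ≤ Real.exp t * ∫ x, ‖h x‖ ^ 2 * Real.exp (-(t * lam x)) ∂μ := by
    intro t ht
    have h1 : W * Real.exp (-(t * (1 + ε))) ≤ ∫ x, ‖h x‖ ^ 2 * Real.exp (-(t * lam x)) ∂μ := by
      rw [← integral_mul_const]
      apply integral_mono (hIntW.mul_const _) (hIntt t)
      intro x
      dsimp only
      by_cases hx : x ∈ Sᶜ
      · rw [Set.indicator_of_mem hx]
        apply mul_le_mul_of_nonneg_left _ (by positivity)
        apply Real.exp_le_exp.2
        have hxle : lam x ≤ 1 + ε := not_lt.1 hx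
        have : t * lam x ≤ t * (1 + ε) := mul_le_mul_of_nonneg_left hxle ht.1
        linarith
      · rw [Set.indicator_of_notMem hx, zero_mul]
        positivity
    have hprod : Real.exp t * Real.exp (-(t * (1 + ε))) = Real.exp (-(ε * t)) := by
      rw [← Real.exp_add]; ring_nf
    have h2 := mul_le_mul_of_nonneg_left h1 (Real.exp_pos t).le
    calc Real.exp (-(ε * t)) * W = Real.exp t * (W * Real.exp (-(t * (1 + ε)))) := by
          rw [← hprod]; ring
      _ ≤ _ := h2
  have hleft_int : IntervalIntegrable (fun t => Real.exp (-(ε * t)) * W) volume 0 s := by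
    apply Continuous.intervalIntegrable
    exact (Real.continuous_exp.comp (continuous_const.mul continuous_id).neg).mul
      continuous_const
  have hmono := intervalIntegral.integral_mono_on hs0.le hleft_int hg_int key
  -- compute left interval integral
  have hval0 : ∫ t in (0:ℝ)..s, Real.exp (-(ε * t)) = (1 - Real.exp (-(ε * s))) / ε := by
    have heq : ∀ t : ℝ, Real.exp (-(ε * t)) = Real.exp (-ε * t) := by intro t; ring_nf
    simp_rw [heq]
    rw [intervalIntegral.integral_comp_mul_left (fun u => Real.exp u) (by linarith : (-ε) ≠ 0)]
    simp only [mul_zero, integral_exp, smul_eq_mul, Real.exp_zero, neg_mul]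
    rw [eq_div_iff (ne_of_gt hε)]
    field_simp
    ring_nf
  have hval : ∫ t in (0:ℝ)..s, Real.exp (-(ε * t)) * W
      = (1 - Real.exp (-(ε * s))) / ε * W := by
    rw [intervalIntegral.integral_mul_const, hval0]
  have hhalf : Real.exp (-(ε * s)) ≤ 1 / 2 := by
    have h1 : 1 < ε * s := by
      rw [div_lt_iff₀ hε] at hs
      linarith
    have h2 : Real.exp (-(ε * s)) ≤ Real.exp (-1) := Real.exp_le_exp.2 (by linarith)
    have h3 : Real.exp (-1) ≤ 1 / 2 := by
      rw [Real.exp_neg]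
      rw [inv_le_comm₀ (Real.exp_pos 1) (by norm_num)]
      have := Real.exp_one_gt_d9
      norm_num at this ⊢
      linarith
    linarith
  constructor
  · -- first estimate
    have hLHS : ∫ x, ‖h x - Set.indicator S h x‖ ^ 2 ∂μ = W := by
      apply integral_congr_ae
      filter_upwards with x
      by_cases hx : x ∈ S
      · rw [Set.indicator_of_mem hx, Set.indicator_of_notMem (by simpa using hx)]
        simp
      · rw [Set.indicator_of_notMem hx, Set.indicator_of_mem (by simpa using hx)]
        simp
    rw [hLHS]
    rw [hval] at hmono
    set I : ℝ := ∫ t in (0:ℝ)..s, Real.exp t * ∫ x, ‖h x‖ ^ 2 * Real.exp (-(t * lam x)) ∂μ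
    have hA : 1 ≤ 2 * ε * ((1 - Real.exp (-(ε * s))) / ε) := by
      rw [mul_div_assoc']
      rw [le_div_iff₀ hε]
      ring_nf
      nlinarith
    nlinarith [mul_le_mul_of_nonneg_left hmono (by positivity : (0:ℝ) ≤ 2 * ε)]
  · -- second estimate
    have hind : ∀ x, ‖Set.indicator S h x‖ ^ 2 = Set.indicator S (fun x => ‖h x‖ ^ 2) x := by
      intro x
      by_cases hx : x ∈ S <;>
        simp [Set.indicator_of_mem, Set.indicator_of_notMem, hx]
    simp_rw [hind]
    rw [← integral_const_mul]
    apply integral_mono _ (hInt.const_mul _)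
    · intro x
      dsimp only
      by_cases hx : x ∈ S
      · rw [Set.indicator_of_mem hx]
        rw [mul_comm]
        apply mul_le_mul_of_nonneg_right _ (by positivity)
        apply Real.exp_le_exp.2
        have hxgt : 1 + ε < lam x := hx
        have : (1 + ε) * s ≤ s * lam x := by nlinarith
        linarith
      · rw [Set.indicator_of_notMem hx, zero_mul]
        positivity
    · have := ((hInt.indicator hS).bdd_mul (hexp_meas s) (Filter.Eventually.of_forall (hexp_bdd s)))
      exact this.congr (Filter.Eventually.of_forall fun x => mul_comm _ _)
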